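/- arXiv:2004.08660 — 4 statements merged into one kernel-verified Lean document; each statement's English description precedes it below -/
import Mathlib

section
/- Let X ~ Γ_λ(α,β) be a degenerate gamma random variable with λ ∈ (0,1), 0 < α, β > 0, and n a positive integer with n+α < 1/λ. Then E[X^n] = (1/β^n) · C(n+α-1, n) / C_λ(1-λ(α+1), n), where C(x,n) = (x)_n/n! is the generalized binomial coefficient and C_λ(x,n) = (x)_{n,λ}/n! is the λ-binomial coefficient with (x)_{n,λ} = x(x-λ)···(x-(n-1)λ). -/
open MeasureTheory Finset Set Filter Topology

/-- The degenerate gamma function `Γ_λ(s) = ∫_0^∞ (1+λt)^{-1/λ} t^{s-1} dt`. -/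
noncomputable def degGamma (lam s : ℝ) : ℝ :=
  ∫ t in Set.Ioi (0:ℝ), (1 + lam * t) ^ (-1/lam) * t ^ (s - 1)

/-- The probability density function of the degenerate gamma distribution `Γ_λ(α,β)`. -/
noncomputable def degGammaPdf (lam α β x : ℝ) : ℝ :=
  if 0 < x then (1 / degGamma lam α) * β * (1 + lam * β * x) ^ (-1/lam) * (β * x) ^ (α - 1)
  else 0

/-- The falling factorial `(x)_n = x(x-1)⋯(x-n+1)`. -/
noncomputable def fallingFactorial (x : ℝ) (n : ℕ) : ℝ :=
  ∏ j ∈ Finset.range n, (x - j)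

/-- The generalized binomial coefficient `C(x,n) = (x)_n / n!`. -/
noncomputable def genBinom (x : ℝ) (n : ℕ) : ℝ := fallingFactorial x n / n.factorial

/-- The degenerate falling factorial `(x)_{n,λ} = x(x-λ)⋯(x-(n-1)λ)`. -/
noncomputable def degFall (x lam : ℝ) (n : ℕ) : ℝ :=
  ∏ j ∈ Finset.range n, (x - j * lam)

/-- The λ-binomial coefficient `C_λ(x,n) = (x)_{n,λ} / n!`. -/
noncomputable def lamBinom (x lam : ℝ) (n : ℕ) : ℝ := degFall x lam n / n.factorial

lemma aux_cont {lam b c : ℝ} (hlam : 0 < lam) :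
    ContinuousOn (fun t : ℝ => (1 + lam * t) ^ c * t ^ b) (Set.Ioi 0) := by
  apply ContinuousOn.mul
  · apply ContinuousOn.rpow_const (by fun_prop)
    intro t ht
    have ht' : (0:ℝ) < t := ht
    left; positivity
  · apply ContinuousOn.rpow_const (by fun_prop)
    intro t ht
    exact Or.inl (ne_of_gt ht)

lemma aux_int {lam b c : ℝ} (hlam : 0 < lam) (hc : c ≤ 0) (hb : -1 < b)
    (hbc : b + c < -1) :
    IntegrableOn (fun t : ℝ => (1 + lam * t) ^ c * t ^ b) (Set.Ioi 0) := by
  have hmeas : ∀ s : Set ℝ, s ⊆ Set.Ioi 0 → MeasurableSet s →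
      AEStronglyMeasurable (fun t : ℝ => (1 + lam * t) ^ c * t ^ b) (volume.restrict s) := by
    intro s hs hm
    exact ((aux_cont (b := b) (c := c) hlam).mono hs).aestronglyMeasurable hm
  have h1 : IntegrableOn (fun t : ℝ => (1 + lam * t) ^ c * t ^ b) (Set.Ioc 0 1) := by
    have hg : IntegrableOn (fun t : ℝ => t ^ b) (Set.Ioc 0 1) := by
      have := intervalIntegral.intervalIntegrable_rpow' (a := 0) (b := 1) hb
      rwa [intervalIntegrable_iff_integrableOn_Ioc_of_le zero_le_one] at this
    refine hg.mono' (hmeas _ (fun x hx => hx.1) measurableSet_Ioc) ?_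
    filter_upwards [ae_restrict_mem measurableSet_Ioc] with t ht
    have ht0 : (0:ℝ) < t := ht.1
    have h1t : (0:ℝ) < 1 + lam * t := by positivity
    rw [Real.norm_eq_abs, abs_mul, abs_of_nonneg (Real.rpow_nonneg h1t.le _),
      abs_of_nonneg (Real.rpow_nonneg ht0.le _)]
    have : (1 + lam * t) ^ c ≤ 1 := by
      have := Real.rpow_le_rpow_of_nonpos one_pos (show (1:ℝ) ≤ 1 + lam * t by nlinarith) hc
      rwa [Real.one_rpow] at this
    calc (1 + lam * t) ^ c * t ^ b ≤ 1 * t ^ b := by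
          exact mul_le_mul_of_nonneg_right this (Real.rpow_nonneg ht0.le _)
      _ = t ^ b := one_mul _
  have h2 : IntegrableOn (fun t : ℝ => (1 + lam * t) ^ c * t ^ b) (Set.Ioi 1) := by
    have hg : IntegrableOn (fun t : ℝ => lam ^ c * t ^ (c + b)) (Set.Ioi 1) :=
      (integrableOn_Ioi_rpow_of_lt (by linarith) one_pos).const_mul _
    refine hg.mono' (hmeas (Set.Ioi 1) (fun x hx => Set.mem_Ioi.mpr (lt_trans one_pos (Set.mem_Ioi.mp hx))) measurableSet_Ioi) ?_
    filter_upwards [ae_restrict_mem measurableSet_Ioi] with t ht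
    have ht0 : (0:ℝ) < t := lt_trans one_pos ht
    have h1t : (0:ℝ) < 1 + lam * t := by positivity
    rw [Real.norm_eq_abs, abs_mul, abs_of_nonneg (Real.rpow_nonneg h1t.le _),
      abs_of_nonneg (Real.rpow_nonneg ht0.le _)]
    have hle : (1 + lam * t) ^ c ≤ (lam * t) ^ c :=
      Real.rpow_le_rpow_of_nonpos (by positivity) (by linarith) hc
    calc (1 + lam * t) ^ c * t ^ b ≤ (lam * t) ^ c * t ^ b :=
          mul_le_mul_of_nonneg_right hle (Real.rpow_nonneg ht0.le _)
      _ = lam ^ c * t ^ (c + b) := by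
          rw [Real.mul_rpow hlam.le ht0.le, Real.rpow_add ht0, mul_assoc]
  rw [← Set.Ioc_union_Ioi_eq_Ioi (zero_le_one' ℝ)]
  exact h1.union h2

lemma degGamma_rec {lam s : ℝ} (hlam : lam ∈ Set.Ioo (0:ℝ) 1) (hs : 0 < s)
    (h : s + 1 < 1 / lam) :
    (1 - lam * (s + 1)) * degGamma lam (s + 1) = s * degGamma lam s := by
  obtain ⟨hl0, hl1⟩ := hlam
  have hne : lam - 1 ≠ 0 := by intro hh; linarith [hh]
  have hinv : s + 1 < 1 / lam := h
  have hinv1 : 1 ≤ 1 / lam := by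
    rw [le_div_iff₀ hl0]; linarith
  set c0 : ℝ := (lam - 1) / lam with hc0
  have hc0' : c0 - 1 = -1 / lam := by rw [hc0, div_sub_one hl0.ne', sub_sub_cancel_left]
  have hc0'' : c0 = -1 / lam + 1 := by rw [← hc0', sub_add_cancel]
  have hc0lam : c0 * lam = lam - 1 := by rw [hc0, div_mul_cancel₀ _ hl0.ne']
  have hc0eq : c0 = 1 - 1 / lam := by rw [hc0'']; ring
  have hsc0 : s + c0 < 0 := by rw [hc0eq]; linarith
  have hc0neg : c0 ≤ 0 := by
    rw [hc0eq]; linarith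
  have hcneg : -1 / lam ≤ 0 := by
    rw [neg_div]
    simp only [neg_nonpos]
    positivity
  set F : ℝ → ℝ := fun t => t ^ s * (1 + lam * t) ^ c0 / (lam - 1) with hF
  set F' : ℝ → ℝ := fun t =>
    (s / (lam - 1)) * ((1 + lam * t) ^ c0 * t ^ (s - 1)) + (1 + lam * t) ^ (-1/lam) * t ^ s
    with hF'
  have alg : ∀ P B T1 T0 : ℝ,
      (s * T1 * P + T0 * (c0 * B * lam)) / (lam - 1)
        = s / (lam - 1) * (P * T1) + B * T0 := by
    intro P B T1 T0
    rw [show c0 * B * lam = B * (lam - 1) by rw [← hc0lam]; ring]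
    field_simp
  have hderiv : ∀ t ∈ Set.Ioi (0:ℝ), HasDerivAt F (F' t) t := by
    intro t ht
    have ht0 : (0:ℝ) < t := ht
    have h1t : (0:ℝ) < 1 + lam * t := by positivity
    have d1 : HasDerivAt (fun t : ℝ => t ^ s) (s * t ^ (s - 1)) t :=
      Real.hasDerivAt_rpow_const (Or.inl ht0.ne')
    have d2 : HasDerivAt (fun t : ℝ => (1 + lam * t) ^ c0)
        (c0 * (1 + lam * t) ^ (-1/lam) * lam) t := by
      have dinner : HasDerivAt (fun t : ℝ => 1 + lam * t) lam t := by
        simpa using ((hasDerivAt_id t).const_mul lam).const_add 1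
      have := (Real.hasDerivAt_rpow_const (p := c0) (Or.inl h1t.ne')).comp t dinner
      rw [hc0'] at this
      exact this.congr_deriv (by ring)
    have hd := (d1.mul d2).div_const (lam - 1)
    refine hd.congr_deriv ?_
    exact alg _ _ _ _
  have hcont0 : ContinuousWithinAt F (Set.Ici 0) 0 := by
    apply ContinuousAt.continuousWithinAt
    apply ContinuousAt.div_const
    apply ContinuousAt.mul
    · exact Real.continuousAt_rpow_const 0 s (Or.inr hs.le)
    · apply ContinuousAt.comp (x := (0:ℝ))
        (g := fun u : ℝ => u ^ c0)
      · exact Real.continuousAt_rpow_const _ _ (Or.inl (by norm_num))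
      · fun_prop
  have hF0 : F 0 = 0 := by
    simp [hF, Real.zero_rpow hs.ne']
  have htend : Tendsto F atTop (𝓝 0) := by
    have h1 : Tendsto (fun t : ℝ => t ^ (s + c0) * ((t⁻¹ + lam) ^ c0 / (lam - 1)))
        atTop (𝓝 (0 * (lam ^ c0 / (lam - 1)))) := by
      apply Tendsto.mul
      · have := tendsto_rpow_neg_atTop (y := -(s + c0)) (by linarith)
        simpa using this
      · apply Tendsto.div_const
        have hbase : Tendsto (fun t : ℝ => t⁻¹ + lam) atTop (𝓝 (0 + lam)) :=
          tendsto_inv_atTop_zero.add_const lam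
        rw [zero_add] at hbase
        exact ((Real.continuousAt_rpow_const lam c0 (Or.inl hl0.ne')).tendsto).comp hbase
    rw [zero_mul] at h1
    apply Tendsto.congr' _ h1
    filter_upwards [eventually_gt_atTop (0:ℝ)] with t ht
    have h1t : 1 + lam * t = t * (t⁻¹ + lam) := by field_simp
    rw [hF]
    simp only
    rw [h1t, Real.mul_rpow ht.le (by positivity), ← mul_assoc,
      ← Real.rpow_add ht]
    ring
  have hint1 : IntegrableOn (fun t : ℝ => (1 + lam * t) ^ c0 * t ^ (s - 1)) (Set.Ioi 0) :=
    aux_int hl0 hc0neg (by linarith) (by linarith)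
  have hint2 : IntegrableOn (fun t : ℝ => (1 + lam * t) ^ (-1/lam) * t ^ s) (Set.Ioi 0) :=
    aux_int hl0 hcneg (by linarith) (by rw [neg_div]; linarith)
  have hint3 : IntegrableOn (fun t : ℝ => (1 + lam * t) ^ (-1/lam) * t ^ (s - 1)) (Set.Ioi 0) :=
    aux_int hl0 hcneg (by linarith) (by rw [neg_div]; linarith)
  have hzero : ∫ t in Set.Ioi (0:ℝ), F' t = 0 - F 0 :=
    integral_Ioi_of_hasDerivAt_of_tendsto hcont0 hderiv
      ((hint1.const_mul _).add hint2) htend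
  rw [hF0, sub_zero] at hzero
  have hsplit : ∫ t in Set.Ioi (0:ℝ), F' t
      = s / (lam - 1) * (∫ t in Set.Ioi (0:ℝ), (1 + lam * t) ^ c0 * t ^ (s - 1))
        + degGamma lam (s + 1) := by
    rw [hF']
    rw [integral_add (hint1.const_mul _) hint2, integral_const_mul]
    congr 1
    rw [degGamma]
    congr 1
    ext t
    rw [add_sub_cancel_right]
  have hA : (∫ t in Set.Ioi (0:ℝ), (1 + lam * t) ^ c0 * t ^ (s - 1))
      = degGamma lam s + lam * degGamma lam (s + 1) := by
    have heq : ∀ t ∈ Set.Ioi (0:ℝ),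
        (1 + lam * t) ^ c0 * t ^ (s - 1)
          = (1 + lam * t) ^ (-1/lam) * t ^ (s - 1)
            + lam * ((1 + lam * t) ^ (-1/lam) * t ^ s) := by
      intro t ht
      have ht0 : (0:ℝ) < t := ht
      have h1t : (0:ℝ) < 1 + lam * t := by positivity
      rw [hc0'', Real.rpow_add h1t, Real.rpow_one,
        show s = (s - 1) + 1 by ring, Real.rpow_add ht0, Real.rpow_one]
      ring
    rw [setIntegral_congr_fun measurableSet_Ioi heq,
      integral_add hint3 (hint2.const_mul _), integral_const_mul]
    congr 2
    rw [degGamma]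
    congr 1
    ext t
    rw [add_sub_cancel_right]
  rw [hsplit, hA] at hzero
  have hG := hzero
  field_simp at hG
  linear_combination -hG

lemma degGamma_pos {lam s : ℝ} (hl0 : 0 < lam) (hs : 0 < s) (h : s < 1 / lam) :
    0 < degGamma lam s := by
  have hcneg : -1 / lam ≤ 0 := by
    rw [neg_div]; simp only [neg_nonpos]; positivity
  have hint : IntegrableOn (fun t : ℝ => (1 + lam * t) ^ (-1/lam) * t ^ (s - 1))
      (Set.Ioi 0) :=
    aux_int hl0 hcneg (by linarith) (by rw [neg_div]; linarith)
  have hnn : 0 ≤ᵐ[volume.restrict (Set.Ioi (0:ℝ))]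
      (fun t : ℝ => (1 + lam * t) ^ (-1/lam) * t ^ (s - 1)) := by
    filter_upwards [ae_restrict_mem measurableSet_Ioi] with t ht
    have ht0 : (0:ℝ) < t := ht
    have h1t : (0:ℝ) < 1 + lam * t := by positivity
    positivity
  rw [degGamma]
  rw [setIntegral_pos_iff_support_of_nonneg_ae hnn hint]
  have hsub : Set.Ioi (0:ℝ) ⊆ Function.support
      (fun t : ℝ => (1 + lam * t) ^ (-1/lam) * t ^ (s - 1)) := by
    intro t ht
    have ht0 : (0:ℝ) < t := ht
    have h1t : (0:ℝ) < 1 + lam * t := by positivity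
    have : (0:ℝ) < (1 + lam * t) ^ (-1/lam) * t ^ (s - 1) := by positivity
    exact ne_of_gt this
  have : Function.support (fun t : ℝ => (1 + lam * t) ^ (-1/lam) * t ^ (s - 1))
      ∩ Set.Ioi 0 = Set.Ioi 0 := Set.inter_eq_self_of_subset_right hsub
  rw [this]
  simp

lemma degGamma_prod (lam α : ℝ) (hlam : lam ∈ Set.Ioo (0:ℝ) 1) (hα : 0 < α) :
    ∀ n : ℕ, (α + n < 1 / lam) →
      degGamma lam (α + n) * ∏ j ∈ range n, (1 - lam * (α + j + 1)) =
        degGamma lam α * ∏ j ∈ range n, (α + j) := by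
  intro n
  induction n with
  | zero => simp
  | succ m ih =>
    intro hbound
    push_cast at hbound ⊢
    have hm : α + m < 1 / lam := by linarith
    have ihm := ih (by linarith)
    rw [prod_range_succ, prod_range_succ]
    push_cast
    have hrec := degGamma_rec hlam (s := α + m) (by positivity) (by linarith)
    have e1 : α + (m + 1 : ℝ) = (α + m) + 1 := by ring
    rw [e1]
    calc degGamma lam (α + m + 1) * ((∏ j ∈ range m, (1 - lam * (α + j + 1)))
          * (1 - lam * (α + m + 1)))
        = ((1 - lam * ((α + m) + 1)) * degGamma lam ((α + m) + 1))
            * ∏ j ∈ range m, (1 - lam * (α + j + 1)) := by ring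
      _ = ((α + m) * degGamma lam (α + m)) * ∏ j ∈ range m, (1 - lam * (α + j + 1)) := by
            rw [hrec]
      _ = (degGamma lam (α + m) * ∏ j ∈ range m, (1 - lam * (α + j + 1))) * (α + m) := by
            ring
      _ = (degGamma lam α * ∏ j ∈ range m, (α + j)) * (α + m) := by rw [ihm]
      _ = degGamma lam α * ((∏ j ∈ range m, (α + j)) * (α + m)) := by ring

theorem degGamma_moment_binom (lam α β : ℝ) (hlam : lam ∈ Set.Ioo (0:ℝ) 1)
    (hα : 0 < α) (hβ : 0 < β) (n : ℕ) (hn : 1 ≤ n) (hnα : n + α < 1 / lam) :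
    ∫ x : ℝ, x ^ n * degGammaPdf lam α β x =
      (1 / β ^ n) * (genBinom (n + α - 1) n / lamBinom (1 - lam * (α + 1)) lam n) := by
  obtain ⟨hl0, hl1⟩ := hlam
  have hn0 : (0:ℝ) < n := by exact_mod_cast hn
  set K := degGamma lam α with hKdef
  have hK : 0 < K := degGamma_pos hl0 hα (by linarith)
  set g : ℝ → ℝ := fun t => (1 + lam * t) ^ (-1/lam) * t ^ ((α + n) - 1) with hg
  -- Step 1 : restrict to Ioi 0
  have step1 : ∫ x : ℝ, x ^ n * degGammaPdf lam α β x
      = ∫ x in Set.Ioi (0:ℝ),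
          x ^ n * ((1 / K) * β * (1 + lam * β * x) ^ (-1/lam) * (β * x) ^ (α - 1)) := by
    rw [← integral_indicator measurableSet_Ioi]
    congr 1
    funext x
    rw [Set.indicator_apply, degGammaPdf]
    by_cases h : 0 < x <;> simp [h, Set.mem_Ioi, hKdef]
  -- Step 2 : rewrite integrand
  have step2 : ∫ x in Set.Ioi (0:ℝ),
        x ^ n * ((1 / K) * β * (1 + lam * β * x) ^ (-1/lam) * (β * x) ^ (α - 1))
      = ∫ x in Set.Ioi (0:ℝ), ((1 / K) * β / β ^ n) * g (β * x) := by
    apply setIntegral_congr_fun measurableSet_Ioi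
    intro x hx
    have hx0 : (0:ℝ) < x := hx
    have hbx : (0:ℝ) < β * x := by positivity
    rw [hg]
    simp only
    rw [show (α + (n:ℝ)) - 1 = (α - 1) + (n:ℝ) by ring, Real.rpow_add hbx,
      Real.rpow_natCast, mul_pow, mul_assoc lam β x]
    have hβn : (β:ℝ) ^ n ≠ 0 := by positivity
    field_simp
  -- Step 3 : substitution t = βx
  have step3 : ∫ x in Set.Ioi (0:ℝ), ((1 / K) * β / β ^ n) * g (β * x)
      = ((1 / K) * β / β ^ n) * (β⁻¹ * degGamma lam (α + n)) := by
    rw [integral_const_mul]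
    congr 1
    have := integral_comp_mul_left_Ioi g 0 hβ
    rw [mul_zero] at this
    rw [this, smul_eq_mul]
    rfl
  -- products
  set P := ∏ j ∈ range n, (1 - lam * (α + j + 1)) with hPdef
  set Q := ∏ j ∈ range n, (α + (j:ℝ)) with hQdef
  have hprod : degGamma lam (α + n) * P = K * Q :=
    degGamma_prod lam α ⟨hl0, hl1⟩ hα n (by linarith)
  have hPpos : 0 < P := by
    apply Finset.prod_pos
    intro j hj
    have hj' : (j:ℝ) + 1 ≤ n := by exact_mod_cast Finset.mem_range.mp hj
    have : lam * (α + j + 1) ≤ lam * (α + n) := by nlinarith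
    have h2 : lam * (α + n) < 1 := by
      rw [mul_comm, ← lt_div_iff₀ hl0]
      linarith
    linarith
  have hGamma : degGamma lam (α + n) = K * Q / P := by
    field_simp [hPpos.ne'] at hprod ⊢
    linarith [hprod]
  -- falling factorial identities
  have hF1 : fallingFactorial ((n:ℝ) + α - 1) n = Q := by
    rw [fallingFactorial, hQdef]
    rw [← Finset.prod_range_reflect (fun j => α + (j:ℝ)) n]
    apply Finset.prod_congr rfl
    intro j hj
    have hj' : j < n := Finset.mem_range.mp hj
    have : ((n - 1 - j : ℕ) : ℝ) = (n:ℝ) - 1 - j := by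
      rw [Nat.sub_sub, Nat.cast_sub (by omega)]
      push_cast
      ring
    rw [this]
    ring
  have hF2 : degFall (1 - lam * (α + 1)) lam n = P := by
    rw [degFall, hPdef]
    apply Finset.prod_congr rfl
    intro j hj
    ring
  have hfact : ((n.factorial : ℝ)) ≠ 0 := by positivity
  rw [step1, step2, step3, hGamma, genBinom, lamBinom, hF1, hF2]
  field_simp
end

section
/- Let X ~ Γ_λ(1,1) with λ ∈ (0,1), and let n be a positive integer with n+1 < 1/λ. Then (1)_{n,λ} · E[X^n] / n! = (1-λ) / ((1-nλ)(1-(n+1)λ)), where (1)_{n,λ} = ∏_{j=0}^{n-1}(1-jλ). -/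
open MeasureTheory Finset

/-- The probability density function of the degenerate gamma distribution `Γ_λ(1,1)`,
namely `f(x) = (1-λ)(1+λx)^{-1/λ}` for `x > 0`. -/
noncomputable def degGammaPdf11 (lam x : ℝ) : ℝ :=
  if 0 < x then (1 - lam) * (1 + lam * x) ^ (-1/lam) else 0

section Aux
open Set Filter Real

lemma aux_int_s11 {lam : ℝ} (hlam : 0 < lam) (p : ℕ) {s : ℝ} (hps : (p:ℝ) + s < -1) :
    IntegrableOn (fun x : ℝ => x ^ p * (1 + lam * x) ^ s) (Set.Ioi 0) := by
  have hpos : ∀ x : ℝ, 0 ≤ x → 0 < 1 + lam * x := fun x hx => by nlinarith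
  have hcont : ContinuousOn (fun x : ℝ => x ^ p * (1 + lam * x) ^ s) (Set.Ici 0) := by
    apply (continuous_pow p).continuousOn.mul
    apply ContinuousOn.rpow_const
    · exact (continuous_const.add (continuous_const.mul continuous_id)).continuousOn
    · exact fun x hx => Or.inl (hpos x hx).ne'
  rw [← Set.Ioc_union_Ioi_eq_Ioi (zero_le_one : (0:ℝ) ≤ 1)]
  apply IntegrableOn.union
  · exact ((hcont.mono (Set.Icc_subset_Ici_self)).integrableOn_Icc).mono_set
      Set.Ioc_subset_Icc_self
  · have hg : IntegrableOn (fun x : ℝ => lam ^ s * x ^ ((p:ℝ) + s)) (Set.Ioi 1) :=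
      (integrableOn_Ioi_rpow_of_lt hps one_pos).const_mul _
    apply hg.mono' ((hcont.mono (fun x (hx : x ∈ Set.Ioi (1:ℝ)) => Set.mem_Ici.mpr (le_of_lt (lt_of_lt_of_le one_pos (le_of_lt hx))) )).aestronglyMeasurable measurableSet_Ioi)
    · filter_upwards [ae_restrict_mem measurableSet_Ioi] with x hx
      have hx1 : (1:ℝ) < x := hx
      have hx0 : (0:ℝ) < x := lt_trans one_pos hx1
      have h1 : (1 + lam * x) ^ s ≤ (lam * x) ^ s := by
        apply rpow_le_rpow_of_nonpos (by positivity) (by linarith)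
        nlinarith [hx0, hlam]
      have h2 : x ^ p * (1 + lam * x) ^ s ≤ lam ^ s * x ^ ((p:ℝ) + s) := by
        calc x ^ p * (1 + lam * x) ^ s ≤ x ^ p * (lam * x) ^ s := by
              apply mul_le_mul_of_nonneg_left h1 (by positivity)
          _ = lam ^ s * x ^ ((p:ℝ) + s) := by
              rw [Real.mul_rpow hlam.le hx0.le, Real.rpow_add hx0, Real.rpow_natCast]
              ring
      rw [Real.norm_eq_abs, abs_of_nonneg (by positivity)]
      exact h2


lemma aux_tendsto {lam : ℝ} (hlam : 0 < lam) (p : ℕ) {s : ℝ} (hps : (p:ℝ) + s < 0) :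
    Tendsto (fun x : ℝ => x ^ p * (1 + lam * x) ^ s) atTop (nhds 0) := by
  have hg : Tendsto (fun x : ℝ => lam ^ s * x ^ ((p:ℝ) + s)) atTop (nhds 0) := by
    have := tendsto_rpow_neg_atTop (y := -((p:ℝ) + s)) (by linarith)
    simp only [neg_neg] at this
    simpa using this.const_mul (lam ^ s)
  apply squeeze_zero' ?_ ?_ hg
  · filter_upwards [eventually_ge_atTop (1:ℝ)] with x hx
    have hx0 : (0:ℝ) < x := lt_of_lt_of_le one_pos hx
    positivity
  · filter_upwards [eventually_ge_atTop (1:ℝ)] with x hx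
    have hx0 : (0:ℝ) < x := lt_of_lt_of_le one_pos hx
    have hs : s ≤ 0 := by
      have : (0:ℝ) ≤ p := Nat.cast_nonneg p
      linarith
    have h1 : (1 + lam * x) ^ s ≤ (lam * x) ^ s := by
      apply rpow_le_rpow_of_nonpos (by positivity) (by nlinarith) hs
    calc x ^ p * (1 + lam * x) ^ s ≤ x ^ p * (lam * x) ^ s :=
          mul_le_mul_of_nonneg_left h1 (by positivity)
      _ = lam ^ s * x ^ ((p:ℝ) + s) := by
          rw [Real.mul_rpow hlam.le hx0.le, Real.rpow_add hx0, Real.rpow_natCast]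
          ring

lemma aux_moment {lam : ℝ} (hlam : lam ∈ Set.Ioo (0:ℝ) 1) (m : ℕ)
    (hm : (m + 1 : ℝ) < 1 / lam) :
    (∫ x in Set.Ioi (0:ℝ), x ^ m * (1 + lam * x) ^ (-1/lam)) *
      ∏ k ∈ Finset.range (m+1), (1 - ((k:ℝ)+1) * lam) = m.factorial := by
  obtain ⟨hl0, hl1⟩ := hlam
  have hlne : lam ≠ 1 := ne_of_lt hl1
  have h1l : 1 < 1/lam := (one_lt_one_div hl0 hl1)
  have hpos : ∀ x : ℝ, 0 ≤ x → 0 < 1 + lam * x := fun x hx => by nlinarith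
  induction m with
  | zero =>
    -- base case : ∫ (1+λx)^{-1/λ} = 1/(1-λ)
    have hderiv : ∀ x ∈ Set.Ici (0:ℝ),
        HasDerivAt (fun x : ℝ => (lam - 1)⁻¹ * (1 + lam * x) ^ (1 - 1/lam))
          ((fun x : ℝ => x ^ 0 * (1 + lam * x) ^ (-1/lam)) x) x := by
      intro x hx
      have h1 : HasDerivAt (fun x : ℝ => 1 + lam * x) lam x := by
        simpa using ((hasDerivAt_id x).const_mul lam).const_add 1
      have h2 := (h1.rpow_const (p := 1 - 1/lam) (Or.inl (hpos x hx).ne'))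
      have h3 := h2.const_mul (lam - 1)⁻¹
      refine h3.congr_deriv ?_
      have he : 1 - 1/lam - 1 = -1/lam := by ring
      have h4 : lam * (1 - 1/lam) = lam - 1 := by field_simp
      simp only [pow_zero, one_mul]
      rw [he, h4, ← mul_assoc, inv_mul_cancel₀ (sub_ne_zero.mpr hlne), one_mul]
    have htt : Tendsto (fun x : ℝ => (lam - 1)⁻¹ * (1 + lam * x) ^ (1 - 1/lam))
        atTop (nhds 0) := by
      have := (aux_tendsto hl0 0 (s := 1 - 1/lam) (by push_cast; linarith)).const_mul (lam-1)⁻¹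
      simpa using this
    have hint : IntegrableOn (fun x : ℝ => x ^ 0 * (1 + lam * x) ^ (-1/lam)) (Set.Ioi 0) :=
      aux_int_s11 hl0 0 (by push_cast; rw [neg_div]; linarith)
    have := integral_Ioi_of_hasDerivAt_of_tendsto' hderiv hint htt
    rw [this]
    simp only [Nat.factorial_zero, Nat.cast_one, Finset.prod_range_one]
    rw [show ((1:ℝ) + lam * 0) = 1 by ring, Real.one_rpow]
    have hne : lam - 1 ≠ 0 := sub_ne_zero.mpr hlne
    field_simp
    rw [zero_add, Finset.prod_range_one]
    push_cast
    ring
  | succ m ih =>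
    have hm2 : (m:ℝ) + 2 < 1/lam := by push_cast at hm; linarith
    have hm' : (m + 1 : ℝ) < 1 / lam := by linarith
    have IH := ih hm'
    have hA : IntegrableOn (fun x : ℝ => x ^ m * (1 + lam * x) ^ (1 - 1/lam)) (Set.Ioi 0) :=
      aux_int_s11 hl0 m (by linarith)
    have hB : IntegrableOn (fun x : ℝ => x ^ (m+1) * (1 + lam * x) ^ (-1/lam)) (Set.Ioi 0) :=
      aux_int_s11 hl0 (m+1) (by push_cast; rw [neg_div]; linarith)
    have hC : IntegrableOn (fun x : ℝ => x ^ m * (1 + lam * x) ^ (-1/lam)) (Set.Ioi 0) :=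
      aux_int_s11 hl0 m (by rw [neg_div]; linarith)
    set f' : ℝ → ℝ := fun x => ((m:ℝ)+1) * (x ^ m * (1 + lam * x) ^ (1 - 1/lam)) +
      (lam - 1) * (x ^ (m+1) * (1 + lam * x) ^ (-1/lam)) with hf'
    have hderiv : ∀ x ∈ Set.Ici (0:ℝ),
        HasDerivAt (fun x : ℝ => x ^ (m+1) * (1 + lam * x) ^ (1 - 1/lam)) (f' x) x := by
      intro x hx
      have h1 : HasDerivAt (fun x : ℝ => 1 + lam * x) lam x := by
        simpa using ((hasDerivAt_id x).const_mul lam).const_add 1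
      have h2 := h1.rpow_const (p := 1 - 1/lam) (Or.inl (hpos x hx).ne')
      have h3 := (hasDerivAt_pow (m+1) x).mul h2
      refine h3.congr_deriv ?_
      have he : 1 - 1/lam - 1 = -1/lam := by ring
      have h4 : lam * (1 - 1/lam) = lam - 1 := by field_simp
      rw [hf']
      simp only [Nat.add_sub_cancel, he]
      push_cast
      rw [show lam * (1 - 1/lam) * (1 + lam * x) ^ (-1/lam) = (lam - 1) * (1 + lam * x) ^ (-1/lam) by rw [h4]]
      ring
    have htt : Tendsto (fun x : ℝ => x ^ (m+1) * (1 + lam * x) ^ (1 - 1/lam))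
        atTop (nhds 0) := aux_tendsto hl0 (m+1) (by push_cast; linarith)
    have hint : IntegrableOn f' (Set.Ioi 0) := (hA.const_mul _).add (hB.const_mul _)
    have hftc := integral_Ioi_of_hasDerivAt_of_tendsto' hderiv hint htt
    have h0 : ∫ x in Set.Ioi (0:ℝ), f' x = 0 := by
      rw [hftc]
      simp [zero_pow (Nat.succ_ne_zero m)]
    rw [hf'] at h0
    rw [integral_add (hA.const_mul _) (hB.const_mul _), integral_const_mul,
      integral_const_mul] at h0
    have hsplit : (∫ x in Set.Ioi (0:ℝ), x ^ m * (1 + lam * x) ^ (1 - 1/lam)) =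
        (∫ x in Set.Ioi (0:ℝ), x ^ m * (1 + lam * x) ^ (-1/lam)) +
        lam * ∫ x in Set.Ioi (0:ℝ), x ^ (m+1) * (1 + lam * x) ^ (-1/lam) := by
      rw [← integral_const_mul, ← integral_add hC (hB.const_mul _)]
      apply setIntegral_congr_fun measurableSet_Ioi
      intro x hx
      have hp : 0 < 1 + lam * x := hpos x (le_of_lt hx)
      have hr : (1 + lam * x) ^ (1 - 1/lam) = (1 + lam * x) * (1 + lam * x) ^ (-1/lam) := by
        rw [show (1 - 1/lam) = 1 + (-1/lam) by ring, Real.rpow_add hp, Real.rpow_one]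
      simp only
      rw [hr, pow_succ]
      ring
    rw [hsplit] at h0
    rw [Finset.prod_range_succ, Nat.factorial_succ]
    push_cast
    linear_combination ((m:ℝ)+1) * IH -
      (∏ k ∈ Finset.range (m+1), (1 - ((k:ℝ)+1) * lam)) * h0

end Aux

theorem degGamma11_moment_formula (lam : ℝ) (hlam : lam ∈ Set.Ioo (0:ℝ) 1)
    (n : ℕ) (hn : 1 ≤ n) (h : (n + 1 : ℝ) < 1 / lam) :
    degFall 1 lam n * (∫ x : ℝ, x ^ n * degGammaPdf11 lam x) / n.factorial =
      (1 - lam) / ((1 - n * lam) * (1 - (n + 1) * lam)) := by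
  obtain ⟨hl0, hl1⟩ := hlam
  have hIeq : (∫ x : ℝ, x ^ n * degGammaPdf11 lam x) =
      (1 - lam) * ∫ x in Set.Ioi (0:ℝ), x ^ n * (1 + lam * x) ^ (-1/lam) := by
    have hfun : (fun x : ℝ => x ^ n * degGammaPdf11 lam x) =
        (Set.Ioi (0:ℝ)).indicator (fun x => (1 - lam) * (x ^ n * (1 + lam * x) ^ (-1/lam))) := by
      funext x
      rw [Set.indicator_apply]
      simp only [Set.mem_Ioi, degGammaPdf11]
      split_ifs with hx
      · ring
      · ring
    rw [hfun, MeasureTheory.integral_indicator measurableSet_Ioi,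
      MeasureTheory.integral_const_mul]
  have key := aux_moment ⟨hl0, hl1⟩ n h
  have hn1 : ((n:ℝ) + 1) * lam < 1 := (lt_div_iff₀ hl0).mp h
  have hP1 : (0:ℝ) < 1 - n * lam := by nlinarith
  have hP2 : (0:ℝ) < 1 - ((n:ℝ) + 1) * lam := by nlinarith
  have hdf1 : degFall 1 lam (n+2) =
      degFall 1 lam n * ((1 - (n:ℝ) * lam) * (1 - ((n:ℝ) + 1) * lam)) := by
    unfold degFall
    rw [Finset.prod_range_succ, Finset.prod_range_succ]
    push_cast
    ring
  have hdf2 : degFall 1 lam (n+2) = ∏ k ∈ Finset.range (n+1), (1 - ((k:ℝ) + 1) * lam) := by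
    unfold degFall
    rw [Finset.prod_range_succ']
    push_cast
    norm_num
  have hdf : degFall 1 lam n * ((1 - (n:ℝ) * lam) * (1 - ((n:ℝ) + 1) * lam)) =
      ∏ k ∈ Finset.range (n+1), (1 - ((k:ℝ) + 1) * lam) := by
    rw [← hdf1, hdf2]
  have hfac : (n.factorial : ℝ) ≠ 0 := by positivity
  rw [hIeq, div_eq_div_iff hfac (by positivity)]
  linear_combination ((1:ℝ) - lam) * key +
    ((1 - lam) * (∫ x in Set.Ioi (0:ℝ), x ^ n * (1 + lam * x) ^ (-1/lam))) * hdf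
end

section
/- Let X ~ Γ_λ(α,1) with λ ∈ (0,1) and suitable convergence. For each k ≥ 0, ∑_{n=0}^k S₁(k,n) C(n+α-1,n)/C_λ(1-(α+1)λ, n) = ∑_{n=0}^k ∑_{l=0}^n ∑_{m=0}^l S_{2,λ}(n,l) S₁(l,m) S_{1,λ}(k,n) C(m+α-1,m)/C_λ(1-(α+1)λ, m), where S₁ are (signed) Stirling numbers of the first kind, S_{1,λ} and S_{2,λ} are the degenerate Stirling numbers of the first and second kind, C(x,n)=(x)_n/n!, and C_λ(x,n)=(x)_{n,λ}/n!. -/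
open Finset

/-- Coefficient extraction: if two polynomial expressions agree for all real `x`,
their coefficients agree. -/
lemma coeff_ext (N : ℕ) (a b : ℕ → ℝ)
    (h : ∀ x : ℝ, ∑ m ∈ range N, a m * x ^ m = ∑ m ∈ range N, b m * x ^ m) :
    ∀ m ∈ Finset.range N, a m = b m := by
  intro m hm
  have hp : (∑ j ∈ range N, Polynomial.C (a j) * Polynomial.X ^ j) =
      ∑ j ∈ range N, Polynomial.C (b j) * Polynomial.X ^ j := by
    apply Polynomial.funext
    intro x
    simpa [Polynomial.eval_finset_sum] using h x
  have := congrArg (fun p => Polynomial.coeff p m) hp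
  simpa [Polynomial.finset_sum_coeff, Polynomial.coeff_X_pow, mul_ite,
    Finset.sum_ite_eq' (range N), hm] using this

/-- The key summation rearrangement. -/
lemma key_rearrange (k : ℕ) (S1lam S2lam S1 : ℕ → ℕ → ℝ) (F : ℕ → ℝ) :
    ∑ m ∈ range (k+1), (∑ n ∈ range (k+1), ∑ l ∈ range (n+1),
        if m ≤ l then S2lam n l * S1 l m * S1lam k n else 0) * F m
    = ∑ n ∈ range (k+1), ∑ l ∈ range (n+1), ∑ m ∈ range (l+1),
        S2lam n l * S1 l m * S1lam k n * F m := by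
  simp_rw [Finset.sum_mul, ite_mul, zero_mul]
  rw [Finset.sum_comm]
  refine Finset.sum_congr rfl fun n hn => ?_
  rw [Finset.sum_comm]
  refine Finset.sum_congr rfl fun l hl => ?_
  simp only [Finset.mem_range] at hn hl
  rw [← Finset.sum_subset (Finset.range_subset_range.2 (by omega : l + 1 ≤ k + 1))]
  · exact Finset.sum_congr rfl fun m hm => by
      simp only [Finset.mem_range] at hm; rw [if_pos (by omega)]
  · intro m hm hm'
    simp only [Finset.mem_range] at hm hm'
    rw [if_neg (by omega)]

theorem stirling_moment_identity (lam α : ℝ) (hlam : lam ∈ Set.Ioo (0:ℝ) 1) (hα : 0 < α)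
    (S1 S1lam S2lam : ℕ → ℕ → ℝ)
    -- `S₁` : (signed) Stirling numbers of the first kind, `(x)_n = ∑_m S₁(n,m) xᵐ`
    (hS1 : ∀ (n : ℕ) (x : ℝ),
      fallingFactorial x n = ∑ m ∈ Finset.range (n + 1), S1 n m * x ^ m)
    -- `S_{1,λ}` : degenerate Stirling numbers of the first kind,
    -- `(x)_n = ∑_l S_{1,λ}(n,l) (x)_{l,λ}`
    (hS1lam : ∀ (n : ℕ) (x : ℝ),
      fallingFactorial x n = ∑ l ∈ Finset.range (n + 1), S1lam n l * degFall x lam l)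
    -- `S_{2,λ}` : degenerate Stirling numbers of the second kind,
    -- `(x)_{n,λ} = ∑_l S_{2,λ}(n,l) (x)_l`
    (hS2lam : ∀ (n : ℕ) (x : ℝ),
      degFall x lam n = ∑ l ∈ Finset.range (n + 1), S2lam n l * fallingFactorial x l)
    (k : ℕ) :
    ∑ n ∈ Finset.range (k + 1),
        S1 k n * (genBinom (n + α - 1) n / lamBinom (1 - (α + 1) * lam) lam n) =
      ∑ n ∈ Finset.range (k + 1), ∑ l ∈ Finset.range (n + 1), ∑ m ∈ Finset.range (l + 1),
        S2lam n l * S1 l m * S1lam k n *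
          (genBinom (m + α - 1) m / lamBinom (1 - (α + 1) * lam) lam m) := by
  set M : ℕ → ℝ := fun m => genBinom (m + α - 1) m / lamBinom (1 - (α + 1) * lam) lam m with hM
  set b : ℕ → ℝ := fun m => ∑ n ∈ range (k+1), ∑ l ∈ range (n+1),
      if m ≤ l then S2lam n l * S1 l m * S1lam k n else 0 with hb
  have h1 : ∀ x : ℝ, ∑ m ∈ range (k+1), S1 k m * x ^ m
      = ∑ m ∈ range (k+1), b m * x ^ m := by
    intro x
    calc ∑ m ∈ range (k+1), S1 k m * x ^ m
        = fallingFactorial x k := (hS1 k x).symm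
      _ = ∑ n ∈ range (k+1), S1lam k n * degFall x lam n := hS1lam k x
      _ = ∑ n ∈ range (k+1), ∑ l ∈ range (n+1), ∑ m ∈ range (l+1),
            S2lam n l * S1 l m * S1lam k n * x ^ m := by
          refine Finset.sum_congr rfl fun n _ => ?_
          rw [hS2lam n x, Finset.mul_sum]
          refine Finset.sum_congr rfl fun l _ => ?_
          rw [hS1 l x, Finset.mul_sum, Finset.mul_sum]
          exact Finset.sum_congr rfl fun m _ => by ring
      _ = ∑ m ∈ range (k+1), b m * x ^ m :=
          (key_rearrange k S1lam S2lam S1 (fun m => x ^ m)).symm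
  have hcoeff := coeff_ext (k+1) (S1 k) b h1
  calc ∑ n ∈ range (k+1), S1 k n * M n
      = ∑ n ∈ range (k+1), b n * M n :=
        Finset.sum_congr rfl fun n hn => by rw [hcoeff n hn]
    _ = _ := key_rearrange k S1lam S2lam S1 M
end

section
/- For λ ∈ (0,1), the degenerate exponential moment generating identity for X ~ Γ_λ(1,1): E[e_λ(Xt)] = ∑_{n=0}^∞ [(1-λ)/((1-nλ)(1-(n+1)λ))] t^n as a formal power series, where e_λ(xt) = ∑_{n=0}^∞ (1)_{n,λ} (xt)^n/n! ... i.e., the coefficient of t^n equals (1)_{n,λ} E[X^n]/n! = (1-λ)/((1-nλ)(1-(n+1)λ)). -/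
open MeasureTheory Finset Set Filter

section aux

variable {lam : ℝ}

lemma degFall_pos (h0 : 0 < lam) {n : ℕ} (h : ((n : ℝ) - 1) * lam < 1) :
    0 < degFall 1 lam n := by
  refine Finset.prod_pos fun j hj => ?_
  have hj' : (j : ℝ) ≤ (n : ℝ) - 1 := by
    have := Finset.mem_range.mp hj
    have : (j : ℝ) + 1 ≤ n := by exact_mod_cast this
    linarith
  nlinarith [h0.le]

lemma degFall_succ_succ (n : ℕ) :
    degFall 1 lam (n + 2) = degFall 1 lam n * ((1 - n * lam) * (1 - (n + 1) * lam)) := by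
  rw [degFall, Finset.prod_range_succ, Finset.prod_range_succ, ← degFall]
  push_cast
  ring

lemma contOn_aux (h0 : 0 < lam) (n : ℕ) (p : ℝ) {s : Set ℝ} (hs : s ⊆ Ici 0) :
    ContinuousOn (fun x : ℝ => x ^ n * (1 + lam * x) ^ p) s := by
  refine ContinuousOn.mul (by fun_prop) ?_
  refine ContinuousOn.rpow_const (by fun_prop) fun x hx => Or.inl ?_
  have hx0 : (0:ℝ) ≤ x := hs hx
  nlinarith

lemma integrable_aux (h0 : 0 < lam) (h1 : lam < 1) {n : ℕ} (h : ((n : ℝ) + 1) * lam < 1) :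
    IntegrableOn (fun x : ℝ => x ^ n * (1 + lam * x) ^ (-1 / lam)) (Ioi 0) := by
  have h2 : IntegrableOn (fun x : ℝ => x ^ n * (1 + lam * x) ^ (-1 / lam)) (Ioc 0 1) :=
    ((contOn_aux h0 n _ (Icc_subset_Ici_self)).integrableOn_Icc).mono_set Ioc_subset_Icc_self
  have hexp : (n : ℝ) + (-1 / lam) < -1 := by
    rw [neg_div, ← sub_eq_add_neg, sub_lt_iff_lt_add]
    have h1l : (n : ℝ) + 1 < 1 / lam := by
      rw [lt_div_iff₀ h0]; linarith
    linarith
  have h3 : IntegrableOn (fun x : ℝ => x ^ n * (1 + lam * x) ^ (-1 / lam)) (Ioi 1) := by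
    have hg : IntegrableOn (fun x : ℝ => lam ^ (-1 / lam) * x ^ ((n : ℝ) + (-1 / lam))) (Ioi 1) :=
      (integrableOn_Ioi_rpow_of_lt hexp one_pos).const_mul _
    refine hg.integrable.mono' ((contOn_aux h0 n _ ?_).aestronglyMeasurable measurableSet_Ioi) ?_
    · exact fun x hx => Set.mem_Ici.mpr (le_of_lt (lt_trans one_pos (Set.mem_Ioi.mp hx)))
    · rw [ae_restrict_iff' measurableSet_Ioi]
      refine ae_of_all _ fun x hx => ?_
      have hx1 : (1:ℝ) < x := hx
      have hx0 : (0:ℝ) < x := lt_trans one_pos hx1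
      have hb : (0:ℝ) < lam * x := by positivity
      have hle : (1 + lam * x) ^ (-1 / lam) ≤ (lam * x) ^ (-1 / lam) := by
        refine Real.rpow_le_rpow_of_nonpos hb (by linarith) ?_
        rw [neg_div]
        simp [le_of_lt, h0, div_nonneg, h0.le]
      have hnn : (0:ℝ) ≤ x ^ n * (1 + lam * x) ^ (-1 / lam) := by positivity
      rw [Real.norm_of_nonneg hnn]
      calc x ^ n * (1 + lam * x) ^ (-1 / lam) ≤ x ^ n * (lam * x) ^ (-1 / lam) := by
            exact mul_le_mul_of_nonneg_left hle (by positivity)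
        _ = lam ^ (-1 / lam) * x ^ ((n : ℝ) + (-1 / lam)) := by
            rw [Real.mul_rpow h0.le hx0.le, Real.rpow_add hx0, Real.rpow_natCast]
            ring
  have := h2.union h3
  rwa [Ioc_union_Ioi_eq_Ioi (zero_le_one)] at this

end aux

section aux2
variable {lam : ℝ}

lemma tendsto_aux (h0 : 0 < lam) (m : ℕ) {p : ℝ} (hp : p ≤ 0) (hmp : (m : ℝ) + p < 0) :
    Tendsto (fun x : ℝ => x ^ m * (1 + lam * x) ^ p) atTop (nhds 0) := by
  have hlim : Tendsto (fun x : ℝ => lam ^ p * x ^ ((m : ℝ) + p)) atTop (nhds 0) := by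
    have := (tendsto_rpow_neg_atTop (y := -((m : ℝ) + p)) (by linarith)).const_mul (lam ^ p)
    simpa using this
  refine squeeze_zero' ?_ ?_ hlim
  · filter_upwards [eventually_ge_atTop (1:ℝ)] with x hx
    have hx0 : (0:ℝ) < x := lt_of_lt_of_le one_pos hx
    positivity
  · filter_upwards [eventually_ge_atTop (1:ℝ)] with x hx
    have hx0 : (0:ℝ) < x := lt_of_lt_of_le one_pos hx
    have hb : (0:ℝ) < lam * x := by positivity
    have hle : (1 + lam * x) ^ p ≤ (lam * x) ^ p :=
      Real.rpow_le_rpow_of_nonpos hb (by linarith) hp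
    calc x ^ m * (1 + lam * x) ^ p ≤ x ^ m * (lam * x) ^ p :=
          mul_le_mul_of_nonneg_left hle (by positivity)
      _ = lam ^ p * x ^ ((m : ℝ) + p) := by
          rw [Real.mul_rpow h0.le hx0.le, Real.rpow_add hx0, Real.rpow_natCast]; ring

lemma hasDeriv_aux (h0 : 0 < lam) (n : ℕ) {x : ℝ} (hx : 0 ≤ x) :
    HasDerivAt (fun x : ℝ => x ^ (n + 1) * (1 + lam * x) ^ (1 - 1/lam))
      (((n : ℝ) + 1) * (x ^ n * (1 + lam * x) ^ (-1 / lam))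
        - (1 - ((n : ℝ) + 2) * lam) * (x ^ (n + 1) * (1 + lam * x) ^ (-1 / lam))) x := by
  have hb : (0:ℝ) < 1 + lam * x := by nlinarith
  have hg : HasDerivAt (fun x : ℝ => 1 + lam * x) lam x := by
    simpa using ((hasDerivAt_id x).const_mul lam).const_add 1
  have hr : HasDerivAt (fun x : ℝ => (1 + lam * x) ^ (1 - 1/lam))
      ((1 - 1/lam) * (1 + lam * x) ^ (1 - 1/lam - 1) * lam) x := by
    have := (Real.hasDerivAt_rpow_const (x := 1 + lam * x) (p := 1 - 1/lam)
      (Or.inl (ne_of_gt hb))).comp x hg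
    simpa [Function.comp_def, mul_comm, mul_assoc, mul_left_comm] using this
  have hmul := (hasDerivAt_pow (n + 1) x).mul hr
  refine hmul.congr_deriv ?_
  have e1 : 1 - 1/lam - 1 = -1/lam := by ring
  have e2 : (1 + lam * x) ^ (1 - 1/lam) = (1 + lam * x) * (1 + lam * x) ^ (-1/lam) := by
    rw [show (1 : ℝ) - 1/lam = 1 + (-1/lam) by ring, Real.rpow_add hb, Real.rpow_one]
  rw [e1, e2]
  push_cast
  field_simp
  ring

lemma recursion_aux (h0 : 0 < lam) (h1 : lam < 1) (n : ℕ) (h : ((n : ℝ) + 2) * lam < 1) :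
    ((n : ℝ) + 1) * ∫ x in Ioi (0:ℝ), x ^ n * (1 + lam * x) ^ (-1 / lam)
      = (1 - ((n : ℝ) + 2) * lam) * ∫ x in Ioi (0:ℝ), x ^ (n + 1) * (1 + lam * x) ^ (-1 / lam) := by
  have hn1 : ((n : ℝ) + 1) * lam < 1 := by nlinarith
  have hint1 := integrable_aux h0 h1 hn1
  have hint2 : IntegrableOn (fun x : ℝ => x ^ (n+1) * (1 + lam * x) ^ (-1 / lam)) (Ioi 0) := by
    refine integrable_aux h0 h1 ?_
    push_cast; linarith
  have hftc := integral_Ioi_of_hasDerivAt_of_tendsto (a := (0:ℝ))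
    (f := fun x : ℝ => x ^ (n + 1) * (1 + lam * x) ^ (1 - 1/lam))
    (f' := fun x => ((n : ℝ) + 1) * (x ^ n * (1 + lam * x) ^ (-1 / lam))
        - (1 - ((n : ℝ) + 2) * lam) * (x ^ (n + 1) * (1 + lam * x) ^ (-1 / lam)))
    (m := 0)
    ((contOn_aux h0 (n+1) (1 - 1/lam) (subset_refl _)).continuousWithinAt self_mem_Ici)
    (fun x hx => hasDeriv_aux h0 n (le_of_lt hx))
    (((hint1.const_mul _).sub (hint2.const_mul _)))
    (by
      refine tendsto_aux h0 (n+1) ?_ ?_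
      · have : (1:ℝ) < 1/lam := by rw [lt_div_iff₀ h0]; linarith
        linarith
      · have : (n : ℝ) + 2 < 1/lam := by rw [lt_div_iff₀ h0]; linarith
        push_cast; linarith)
  rw [integral_sub (hint1.const_mul _) (hint2.const_mul _),
    integral_const_mul, integral_const_mul] at hftc
  simp at hftc
  linarith

lemma base_aux (h0 : 0 < lam) (h1 : lam < 1) :
    ∫ x in Ioi (0:ℝ), (1 + lam * x) ^ (-1 / lam) = 1 / (1 - lam) := by
  have hp : (1:ℝ) - 1/lam < 0 := by
    have : (1:ℝ) < 1/lam := by rw [lt_div_iff₀ h0]; linarith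
    linarith
  have hint : IntegrableOn (fun x : ℝ => (1 + lam * x) ^ (-1 / lam)) (Ioi 0) := by
    have := integrable_aux h0 h1 (n := 0) (by norm_num; linarith)
    simpa using this
  have hderiv : ∀ x ∈ Ioi (0:ℝ), HasDerivAt (fun x : ℝ => (1 + lam * x) ^ (1 - 1/lam))
      ((lam - 1) * (1 + lam * x) ^ (-1 / lam)) x := by
    intro x hx
    have hx0 : (0:ℝ) < x := hx
    have hb : (0:ℝ) < 1 + lam * x := by nlinarith
    have hg : HasDerivAt (fun x : ℝ => 1 + lam * x) lam x := by
      simpa using ((hasDerivAt_id x).const_mul lam).const_add 1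
    have := (Real.hasDerivAt_rpow_const (x := 1 + lam * x) (p := 1 - 1/lam)
      (Or.inl (ne_of_gt hb))).comp x hg
    refine this.congr_deriv ?_
    have e1 : 1 - 1/lam - 1 = -1/lam := by ring
    rw [e1]
    field_simp
  have hcont : ContinuousWithinAt (fun x : ℝ => (1 + lam * x) ^ (1 - 1/lam)) (Ici 0) 0 := by
    have := contOn_aux (s := Ici (0:ℝ)) h0 0 (1 - 1/lam) (subset_refl _)
    simpa using this.continuousWithinAt self_mem_Ici
  have htend : Tendsto (fun x : ℝ => (1 + lam * x) ^ (1 - 1/lam)) atTop (nhds 0) := by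
    have := tendsto_aux h0 0 hp.le (by simpa using hp)
    simpa using this
  have hftc := integral_Ioi_of_hasDerivAt_of_tendsto hcont hderiv
    (hint.const_mul (lam - 1)) htend
  rw [integral_const_mul] at hftc
  norm_num at hftc
  have hne : (1:ℝ) - lam ≠ 0 := by linarith
  rw [eq_div_iff hne]
  nlinarith [hftc]

lemma I_formula (h0 : 0 < lam) (h1 : lam < 1) :
    ∀ n : ℕ, ((n : ℝ) + 1) * lam < 1 →
      ∫ x in Ioi (0:ℝ), x ^ n * (1 + lam * x) ^ (-1 / lam)
        = (n.factorial : ℝ) / degFall 1 lam (n + 2) := by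
  intro n
  induction n with
  | zero =>
    intro _
    have h2 : degFall 1 lam 2 = 1 - lam := by
      simp [degFall, Finset.prod_range_succ]
    simp only [pow_zero, one_mul, Nat.factorial_zero, Nat.cast_one, h2]
    exact base_aux h0 h1
  | succ n ih =>
    intro hh
    have hh' : ((n : ℝ) + 2) * lam < 1 := by push_cast at hh; linarith
    have hn1 : ((n : ℝ) + 1) * lam < 1 := by nlinarith
    have hrec := recursion_aux h0 h1 n hh'
    rw [ih hn1] at hrec
    have hpos : 0 < degFall 1 lam (n + 2) := by
      refine degFall_pos h0 ?_
      push_cast; nlinarith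
    have hd3 : degFall 1 lam (n + 3) = degFall 1 lam (n + 2) * (1 - ((n : ℝ) + 2) * lam) := by
      rw [show n + 3 = (n + 2) + 1 from rfl, degFall, Finset.prod_range_succ, ← degFall]
      push_cast; ring
    have hc : (1 : ℝ) - ((n : ℝ) + 2) * lam > 0 := by linarith
    rw [show n + 1 + 2 = n + 3 from rfl, hd3]
    rw [eq_div_iff (by positivity)]
    have : ((n:ℝ)+1) * ((n.factorial : ℝ) / degFall 1 lam (n + 2))
        = ((n:ℝ)+1) * (n.factorial : ℝ) / degFall 1 lam (n + 2) := by ring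
    rw [this] at hrec
    have hfac : ((n+1).factorial : ℝ) = ((n:ℝ)+1) * (n.factorial : ℝ) := by
      push_cast [Nat.factorial_succ]; ring
    field_simp at hrec ⊢
    push_cast at hrec ⊢
    nlinarith [hrec]

end aux2

/-- The coefficient of `tⁿ` in `E[e_λ(Xt)] = ∑ₙ (1)_{n,λ} E[Xⁿ] tⁿ/n!` for `X ∼ Γ_λ(1,1)`
equals `(1-λ)/((1-nλ)(1-(n+1)λ))`. -/
theorem degExp_mgf_coeff (lam : ℝ) (hlam : lam ∈ Set.Ioo (0:ℝ) 1)
    (n : ℕ) (h : ((n : ℝ) + 1) * lam < 1) :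
    degFall 1 lam n * (∫ x : ℝ, x ^ n * degGammaPdf11 lam x) / n.factorial =
      (1 - lam) / ((1 - n * lam) * (1 - (n + 1) * lam)) := by
  obtain ⟨h0, h1⟩ := hlam
  have hind : (fun x : ℝ => x ^ n * degGammaPdf11 lam x)
      = Set.indicator (Ioi 0) (fun x : ℝ => (1 - lam) * (x ^ n * (1 + lam * x) ^ (-1/lam))) := by
    funext x
    by_cases hx : 0 < x
    · simp [degGammaPdf11, hx, Set.indicator_of_mem (Set.mem_Ioi.mpr hx)]
      ring
    · simp [degGammaPdf11, hx, Set.indicator_of_notMem (by simpa using hx : x ∉ Ioi (0:ℝ))]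
  rw [hind, integral_indicator measurableSet_Ioi, integral_const_mul, I_formula h0 h1 n h]
  have hd : degFall 1 lam (n + 2) = degFall 1 lam n * ((1 - n * lam) * (1 - (n + 1) * lam)) :=
    degFall_succ_succ n
  have hdf : 0 < degFall 1 lam n := degFall_pos h0 (by nlinarith)
  have hf1 : (0:ℝ) < 1 - n * lam := by nlinarith
  have hf2 : (0:ℝ) < 1 - ((n:ℝ) + 1) * lam := by nlinarith
  have hfac : (0:ℝ) < (n.factorial : ℝ) := by positivity
  rw [hd]
  field_simp
end
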